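/- Let m, ρ₀ > 0, set θ = 2ρ₀/m, and let ρ : 𝕋 → (0,∞) be continuous. Then sup { ∫₀¹ φ(x) ρ(x) dx + (m/2) ∫₀¹ log(1 − θ φ(x)) dx : φ : 𝕋 → ℝ continuous with θ · sup_x φ(x) < 1 } = (m/2) ∫₀¹ ( ρ(x)/ρ₀ − 1 − log(ρ(x)/ρ₀) ) dx. That is, the equilibrium rate functional S_{ρ₀,m} evaluated at a continuous positive density is the Legendre transform of the functional G(φ) = −(m/2)∫₀¹ log(1−θφ(x)) dx. -/

import Mathlib

open Real intervalIntegral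

lemma periodic_exists_max {f : ℝ → ℝ} (hf : Continuous f) (hp : ∀ x, f (x + 1) = f x) :
    ∃ c ∈ Set.Icc (0:ℝ) 1, ∀ x, f x ≤ f c := by
  obtain ⟨c, hc, hmax⟩ := isCompact_Icc.exists_isMaxOn (Set.nonempty_Icc.2 zero_le_one)
    hf.continuousOn
  refine ⟨c, hc, fun x => ?_⟩
  have hper : Function.Periodic f 1 := hp
  have hx : f x = f (Int.fract x) := by
    have h := hper.sub_int_mul_eq (x := x) ⌊x⌋
    simp only [mul_one] at h
    rw [← h]; rfl
  rw [hx]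
  exact hmax (Set.mem_Icc.2 ⟨Int.fract_nonneg x, (Int.fract_lt_one x).le⟩)

lemma pointwise_ineq (m ρ₀ θ : ℝ) (hm : 0 < m) (hρ₀ : 0 < ρ₀) (hθ : θ = 2 * ρ₀ / m)
    (t r : ℝ) (hr : 0 < r) (ht : 0 < 1 - θ * t) :
    t * r + m / 2 * Real.log (1 - θ * t) ≤ m / 2 * (r / ρ₀ - 1 - Real.log (r / ρ₀)) := by
  have hrr : 0 < r / ρ₀ := div_pos hr hρ₀
  have hlog : Real.log (1 - θ * t) = Real.log ((1 - θ * t) * (r / ρ₀)) - Real.log (r / ρ₀) := by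
    rw [Real.log_mul (ne_of_gt ht) (ne_of_gt hrr)]; ring
  have hle : Real.log ((1 - θ * t) * (r / ρ₀)) ≤ (1 - θ * t) * (r / ρ₀) - 1 :=
    Real.log_le_sub_one_of_pos (mul_pos ht hrr)
  rw [hlog]
  have key : m / 2 * ((1 - θ * t) * (r / ρ₀) - 1) = m / 2 * (r / ρ₀) - t * r - m / 2 := by
    rw [hθ]; field_simp
  nlinarith [hm]

lemma pointwise_eq (m ρ₀ θ : ℝ) (hm : 0 < m) (hρ₀ : 0 < ρ₀) (hθ : θ = 2 * ρ₀ / m)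
    (r : ℝ) (hr : 0 < r) :
    (m / (2 * ρ₀) * (1 - ρ₀ / r)) * r + m / 2 * Real.log (1 - θ * (m / (2 * ρ₀) * (1 - ρ₀ / r)))
      = m / 2 * (r / ρ₀ - 1 - Real.log (r / ρ₀)) := by
  have h1 : 1 - θ * (m / (2 * ρ₀) * (1 - ρ₀ / r)) = ρ₀ / r := by
    rw [hθ]; field_simp; ring
  rw [h1, Real.log_div (ne_of_gt hρ₀) (ne_of_gt hr), Real.log_div (ne_of_gt hr) (ne_of_gt hρ₀)]
  field_simp
  ring

/-- **The equilibrium rate functional is the Legendre transform of the cumulant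
generating functional.**  Let `m, ρ₀ > 0`, `θ = 2ρ₀/m`, and let `ρ : 𝕋 → (0,∞)` be
continuous (a continuous positive 1-periodic function on `ℝ`).  Then
`sup { ∫₀¹ φ ρ + (m/2) ∫₀¹ log(1 − θφ) : φ continuous 1-periodic, θ ⬝ sup φ < 1 }`
`  = (m/2) ∫₀¹ ( ρ/ρ₀ − 1 − log(ρ/ρ₀) )`. -/
theorem rate_functional_legendre_transform (m ρ₀ θ : ℝ) (hm : 0 < m) (hρ₀ : 0 < ρ₀)
    (hθ : θ = 2 * ρ₀ / m) (ρ : ℝ → ℝ) (hρcont : Continuous ρ)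
    (hρper : ∀ x, ρ (x + 1) = ρ x) (hρpos : ∀ x, 0 < ρ x) :
    sSup {y : ℝ | ∃ φ : ℝ → ℝ, Continuous φ ∧ (∀ x, φ (x + 1) = φ x) ∧
        θ * (⨆ x, φ x) < 1 ∧
        y = (∫ x in (0 : ℝ)..1, φ x * ρ x) + m / 2 * ∫ x in (0 : ℝ)..1, Real.log (1 - θ * φ x)}
      = m / 2 * ∫ x in (0 : ℝ)..1, (ρ x / ρ₀ - 1 - Real.log (ρ x / ρ₀)) := by
  have hθpos : 0 < θ := by rw [hθ]; positivity
  have hgcont : Continuous fun x => ρ x / ρ₀ - 1 - Real.log (ρ x / ρ₀) := by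
    refine ((hρcont.div_const ρ₀).sub continuous_const).sub ?_
    exact Real.continuousOn_log.comp_continuous (hρcont.div_const ρ₀)
      (fun x => ne_of_gt (div_pos (hρpos x) hρ₀))
  -- the maximizer
  set ψ : ℝ → ℝ := fun x => m / (2 * ρ₀) * (1 - ρ₀ / ρ x) with hψ
  have hψcont : Continuous ψ :=
    continuous_const.mul (continuous_const.sub
      (continuous_const.div hρcont (fun x => ne_of_gt (hρpos x))))
  have hψper : ∀ x, ψ (x + 1) = ψ x := fun x => by simp [hψ, hρper x]
  -- upper bound for each member of the set
  have hG : ∀ (φ : ℝ → ℝ), Continuous φ → (∀ x, 0 < 1 - θ * φ x) →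
      (∫ x in (0:ℝ)..1, φ x * ρ x) + m / 2 * ∫ x in (0:ℝ)..1, Real.log (1 - θ * φ x)
        ≤ m / 2 * ∫ x in (0:ℝ)..1, (ρ x / ρ₀ - 1 - Real.log (ρ x / ρ₀)) := by
    intro φ hφc hφlt
    have hlogc : Continuous fun x => Real.log (1 - θ * φ x) :=
      Real.continuousOn_log.comp_continuous
        (continuous_const.sub (continuous_const.mul hφc)) (fun x => ne_of_gt (hφlt x))
    have h1 : IntervalIntegrable (fun x => φ x * ρ x) MeasureTheory.volume 0 1 :=
      (hφc.mul hρcont).intervalIntegrable 0 1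
    have h2 : IntervalIntegrable (fun x => m / 2 * Real.log (1 - θ * φ x))
        MeasureTheory.volume 0 1 := (continuous_const.mul hlogc).intervalIntegrable 0 1
    rw [← intervalIntegral.integral_const_mul]
    rw [← intervalIntegral.integral_const_mul, ← intervalIntegral.integral_add h1 h2]
    apply intervalIntegral.integral_mono_on zero_le_one (h1.add h2)
      ((continuous_const.mul hgcont).intervalIntegrable 0 1)
    intro x _
    exact pointwise_ineq m ρ₀ θ hm hρ₀ hθ (φ x) (ρ x) (hρpos x) (hφlt x)
  apply le_antisymm
  · -- sSup ≤ RHS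
    apply Real.sSup_le
    · rintro y ⟨φ, hφc, hφper, hφsup, rfl⟩
      have hbdd : BddAbove (Set.range φ) := by
        obtain ⟨c, _, hc⟩ := periodic_exists_max hφc hφper
        exact ⟨φ c, by rintro _ ⟨x, rfl⟩; exact hc x⟩
      have hφlt : ∀ x, 0 < 1 - θ * φ x := by
        intro x
        have : θ * φ x ≤ θ * ⨆ x, φ x :=
          mul_le_mul_of_nonneg_left (le_ciSup hbdd x) hθpos.le
        linarith
      exact hG φ hφc hφlt
    · -- RHS nonneg
      rw [← intervalIntegral.integral_const_mul]
      apply intervalIntegral.integral_nonneg zero_le_one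
      intro x _
      have h := pointwise_ineq m ρ₀ θ hm hρ₀ hθ 0 (ρ x) (hρpos x) (by simp)
      simpa using h
  · -- RHS ≤ sSup : the maximizer ψ achieves equality
    have hψlt : ∀ x, 1 - θ * ψ x = ρ₀ / ρ x := by
      intro x
      have hrx := (hρpos x).ne'
      rw [hψ, hθ]; field_simp; ring
    have hsuplt : θ * (⨆ x, ψ x) < 1 := by
      obtain ⟨c, _, hc⟩ := periodic_exists_max hψcont hψper
      have hbdd : BddAbove (Set.range ψ) := ⟨ψ c, by rintro _ ⟨x, rfl⟩; exact hc x⟩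
      have hsup : (⨆ x, ψ x) ≤ ψ c := ciSup_le hc
      have : θ * ψ c < 1 := by
        have := hψlt c
        have : θ * ψ c = 1 - ρ₀ / ρ c := by linarith
        rw [this]
        have : 0 < ρ₀ / ρ c := div_pos hρ₀ (hρpos c)
        linarith
      calc θ * (⨆ x, ψ x) ≤ θ * ψ c := mul_le_mul_of_nonneg_left hsup hθpos.le
        _ < 1 := this
    have hmem : m / 2 * (∫ x in (0:ℝ)..1, (ρ x / ρ₀ - 1 - Real.log (ρ x / ρ₀))) ∈
        {y : ℝ | ∃ φ : ℝ → ℝ, Continuous φ ∧ (∀ x, φ (x + 1) = φ x) ∧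
          θ * (⨆ x, φ x) < 1 ∧
          y = (∫ x in (0 : ℝ)..1, φ x * ρ x) +
            m / 2 * ∫ x in (0 : ℝ)..1, Real.log (1 - θ * φ x)} := by
      refine ⟨ψ, hψcont, hψper, hsuplt, ?_⟩
      have hlogc : Continuous fun x => Real.log (1 - θ * ψ x) := by
        refine Real.continuousOn_log.comp_continuous
          (continuous_const.sub (continuous_const.mul hψcont)) (fun x => ?_)
        rw [hψlt x]; exact ne_of_gt (div_pos hρ₀ (hρpos x))
      have h1 : IntervalIntegrable (fun x => ψ x * ρ x) MeasureTheory.volume 0 1 :=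
        (hψcont.mul hρcont).intervalIntegrable 0 1
      have h2 : IntervalIntegrable (fun x => m / 2 * Real.log (1 - θ * ψ x))
          MeasureTheory.volume 0 1 := (continuous_const.mul hlogc).intervalIntegrable 0 1
      rw [← intervalIntegral.integral_const_mul, ← intervalIntegral.integral_const_mul,
        ← intervalIntegral.integral_add h1 h2]
      apply intervalIntegral.integral_congr
      intro x _
      exact (pointwise_eq m ρ₀ θ hm hρ₀ hθ (ρ x) (hρpos x)).symm
    have hbddS : BddAbove {y : ℝ | ∃ φ : ℝ → ℝ, Continuous φ ∧ (∀ x, φ (x + 1) = φ x) ∧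
          θ * (⨆ x, φ x) < 1 ∧
          y = (∫ x in (0 : ℝ)..1, φ x * ρ x) +
            m / 2 * ∫ x in (0 : ℝ)..1, Real.log (1 - θ * φ x)} := by
      refine ⟨m / 2 * ∫ x in (0:ℝ)..1, (ρ x / ρ₀ - 1 - Real.log (ρ x / ρ₀)), ?_⟩
      rintro y ⟨φ, hφc, hφper, hφsup, rfl⟩
      have hbdd : BddAbove (Set.range φ) := by
        obtain ⟨c, _, hc⟩ := periodic_exists_max hφc hφper
        exact ⟨φ c, by rintro _ ⟨x, rfl⟩; exact hc x⟩
      have hφlt : ∀ x, 0 < 1 - θ * φ x := by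
        intro x
        have : θ * φ x ≤ θ * ⨆ x, φ x :=
          mul_le_mul_of_nonneg_left (le_ciSup hbdd x) hθpos.le
        linarith
      exact hG φ hφc hφlt
    exact le_csSup hbddS hmem
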